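/- In the setting below, let t < s in [0,T] and let x, x' ∈ ℝ^{nd} with d(x,x') ≤ 1, and let θ_{t,·}(x) and θ_{t,·}(x') be any flows started from x and x' at time t. Then there exists a constant C ≥ 1, depending only on n, d, α, β, the matrix A and the Hölder constant K of F (and not on t, s, x, x'), such that d(θ_{t,s}(x), θ_{t,s}(x')) ≤ C [ d(x,x') + (s−t)^{1/α} ]. -/

import Mathlib

open MeasureTheory

/-- The `i`-th d-dimensional block of a point of `ℝ^{nd}`, as a vector of the Euclidean
space `ℝ^d`. -/
noncomputable def blkOf (n d : ℕ) (x : Fin n × Fin d → ℝ) (i : Fin n) :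
    EuclideanSpace ℝ (Fin d) :=
  (EuclideanSpace.equiv (Fin d) ℝ).symm (fun a => x (i, a))

noncomputable def blkL (n d : ℕ) (i : Fin n) :
    (Fin n × Fin d → ℝ) →L[ℝ] EuclideanSpace ℝ (Fin d) :=
  ((EuclideanSpace.equiv (Fin d) ℝ).symm :
      (Fin d → ℝ) ≃L[ℝ] EuclideanSpace ℝ (Fin d)).toContinuousLinearMap.comp
    (ContinuousLinearMap.pi fun a => ContinuousLinearMap.proj (i, a))

lemma blkL_apply {n d : ℕ} (i : Fin n) (x : Fin n × Fin d → ℝ) :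
    blkL n d i x = blkOf n d x i := rfl

lemma norm_blk_le_sum {n d : ℕ} (i : Fin n) (x : Fin n × Fin d → ℝ) :
    ‖blkOf n d x i‖ ≤ ∑ a : Fin d, |x (i, a)| := by
  rw [EuclideanSpace.norm_eq]
  calc Real.sqrt (∑ a, ‖blkOf n d x i a‖^2) ≤ Real.sqrt ((∑ a, |x (i,a)|)^2) := by
        apply Real.sqrt_le_sqrt
        have h : ∀ a : Fin d, ‖blkOf n d x i a‖ = |x (i,a)| := fun a => rfl
        simp only [h]
        exact Finset.sum_sq_le_sq_sum_of_nonneg (fun a _ => abs_nonneg _)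
    _ = ∑ a, |x (i,a)| := Real.sqrt_sq (by positivity)

lemma abs_le_norm_blk {n d : ℕ} (i : Fin n) (x : Fin n × Fin d → ℝ) (a : Fin d) :
    |x (i, a)| ≤ ‖blkOf n d x i‖ := by
  rw [EuclideanSpace.norm_eq]
  have h : |x (i,a)| = Real.sqrt (‖blkOf n d x i a‖^2) := by
    rw [Real.sqrt_sq_eq_abs, abs_norm]; rfl
  rw [h]
  apply Real.sqrt_le_sqrt
  exact Finset.single_le_sum (f := fun b => ‖blkOf n d x i b‖^2)
    (fun b _ => by positivity) (Finset.mem_univ a)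

lemma blk_mulVec_zero {n d : ℕ} (A : Matrix (Fin n × Fin d) (Fin n × Fin d) ℝ)
    (hA : ∀ (i j : Fin n) (a b : Fin d), (j : ℕ) + 1 ≠ (i : ℕ) → A (i, a) (j, b) = 0)
    (i : Fin n) (hi : (i : ℕ) = 0) (w : Fin n × Fin d → ℝ) :
    blkOf n d (A.mulVec w) i = 0 := by
  have h : ∀ a : Fin d, A.mulVec w (i, a) = 0 := by
    intro a
    show ∑ p : Fin n × Fin d, A (i, a) p * w p = 0
    apply Finset.sum_eq_zero
    rintro ⟨j, b⟩ -
    rw [hA i j a b (by omega), zero_mul]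
  ext a
  exact h a

lemma norm_blk_mulVec_le {n d : ℕ} (A : Matrix (Fin n × Fin d) (Fin n × Fin d) ℝ)
    (hA : ∀ (i j : Fin n) (a b : Fin d), (j : ℕ) + 1 ≠ (i : ℕ) → A (i, a) (j, b) = 0)
    (i j : Fin n) (hij : (j : ℕ) + 1 = (i : ℕ)) (w : Fin n × Fin d → ℝ) :
    ‖blkOf n d (A.mulVec w) i‖ ≤
      (∑ q : Fin n × Fin d, ∑ p : Fin n × Fin d, |A q p|) * ‖blkOf n d w j‖ := by
  calc ‖blkOf n d (A.mulVec w) i‖ ≤ ∑ a : Fin d, |A.mulVec w (i, a)| := norm_blk_le_sum i _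
    _ ≤ ∑ a : Fin d, (∑ p : Fin n × Fin d, |A (i, a) p|) * ‖blkOf n d w j‖ := by
        apply Finset.sum_le_sum
        intro a _
        have h1 : A.mulVec w (i, a) = ∑ p : Fin n × Fin d, A (i, a) p * w p := rfl
        rw [h1, Finset.sum_mul]
        refine (Finset.abs_sum_le_sum_abs _ _).trans (Finset.sum_le_sum ?_)
        rintro ⟨k, b⟩ -
        rw [abs_mul]
        by_cases hk : k = j
        · subst hk
          exact mul_le_mul_of_nonneg_left (abs_le_norm_blk k w b) (abs_nonneg _)
        · have hk' : (k : ℕ) ≠ (j : ℕ) := fun h => hk (Fin.ext h)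
          rw [hA i k a b (by omega)]
          simp
    _ ≤ (∑ q : Fin n × Fin d, ∑ p : Fin n × Fin d, |A q p|) * ‖blkOf n d w j‖ := by
        rw [← Finset.sum_mul]
        apply mul_le_mul_of_nonneg_right _ (norm_nonneg _)
        have hinj : Function.Injective (fun a : Fin d => ((i, a) : Fin n × Fin d)) :=
          fun a b h => congrArg Prod.snd h
        calc ∑ a : Fin d, ∑ p : Fin n × Fin d, |A (i, a) p|
            = ∑ q ∈ Finset.univ.image (fun a : Fin d => ((i, a) : Fin n × Fin d)),
                ∑ p : Fin n × Fin d, |A q p| := by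
              rw [Finset.sum_image (fun a _ b _ h => hinj h)]
          _ ≤ ∑ q : Fin n × Fin d, ∑ p : Fin n × Fin d, |A q p| :=
              Finset.sum_le_sum_of_subset_of_nonneg (Finset.subset_univ _)
                (fun q _ _ => Finset.sum_nonneg fun p _ => abs_nonneg _)

/-- The anisotropic distance `d(x,y) = Σ_j |(x-y)_j|^{1/(1+α(j-1))}` on `ℝ^{nd}`
(`j : Fin n` is 0-indexed, so the exponent reads `1/(1+α j)`). -/
noncomputable def anisoDist (n d : ℕ) (α : ℝ) (x y : Fin n × Fin d → ℝ) : ℝ :=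
  ∑ j : Fin n, ‖blkOf n d (x - y) j‖ ^ (1 / (1 + α * (j : ℕ)))

/-- `θ` is a flow started from `x` at time `t`, i.e. a continuous solution on `[t,T]` of
`θ s = x + ∫_t^s (A θ_v + F(v, θ_v)) dv`. -/
def IsFlow (n d : ℕ) (T : ℝ) (A : Matrix (Fin n × Fin d) (Fin n × Fin d) ℝ)
    (F : ℝ → (Fin n × Fin d → ℝ) → (Fin n × Fin d → ℝ)) (t : ℝ)
    (x : Fin n × Fin d → ℝ) (θ : ℝ → Fin n × Fin d → ℝ) : Prop :=
  ContinuousOn θ (Set.Icc t T) ∧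
  ∀ s ∈ Set.Icc t T, θ s = x + ∫ v in t..s, (A.mulVec (θ v) + F v (θ v))

set_option maxHeartbeats 2000000 in
/-- Controls on the Flows: for any two flows started from `x` and `x'` at time `t`,
`d(θ_{t,s}(x), θ_{t,s}(x')) ≤ C [d(x,x') + (s-t)^{1/α}]`,
with `C` depending only on the data `n, d, α, β, A, K`. -/
theorem flow_anisoDist_sensitivity (n d : ℕ) (hn : 1 ≤ n) (hd : 1 ≤ d)
    (α β T : ℝ) (hα : α ∈ Set.Ioo (0 : ℝ) 2) (hβ : β ∈ Set.Ioo (0 : ℝ) 1)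
    (hαβ : α + β ∈ Set.Ioo (1 : ℝ) 2) (hβα : β < α) (hT0 : 0 < T) (hT1 : T ≤ 1)
    (A : Matrix (Fin n × Fin d) (Fin n × Fin d) ℝ)
    (hA : ∀ (i j : Fin n) (a b : Fin d), (j : ℕ) + 1 ≠ (i : ℕ) → A (i, a) (j, b) = 0)
    (F : ℝ → (Fin n × Fin d → ℝ) → (Fin n × Fin d → ℝ))
    (hFc : ContinuousOn (fun p : ℝ × (Fin n × Fin d → ℝ) => F p.1 p.2)
      (Set.Icc 0 T ×ˢ Set.univ))
    (hFstruct : ∀ (i : Fin n) (t : ℝ) (x y : Fin n × Fin d → ℝ),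
      (∀ k : Fin n, i ≤ k → blkOf n d x k = blkOf n d y k) →
      blkOf n d (F t x) i = blkOf n d (F t y) i)
    (K : ℝ) (hK : 0 ≤ K)
    (hF1 : ∀ t ∈ Set.Icc (0 : ℝ) T, ∀ x x' : Fin n × Fin d → ℝ,
      ‖blkOf n d (F t x - F t x') ⟨0, hn⟩‖ ≤
        K * ∑ k : Fin n, ‖blkOf n d (x - x') k‖ ^ (β / (1 + α * (k : ℕ))))
    (hFi : ∀ i : Fin n, 1 ≤ (i : ℕ) → ∀ t ∈ Set.Icc (0 : ℝ) T, ∀ x x' : Fin n × Fin d → ℝ,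
      ‖blkOf n d (F t x - F t x') i‖ ≤
        K * ∑ k ∈ Finset.univ.filter (fun k : Fin n => i ≤ k),
          ‖blkOf n d (x - x') k‖ ^ ((1 + α * ((i : ℕ) - 1 : ℝ) + β) / (1 + α * (k : ℕ)))) :
    ∃ C : ℝ, 1 ≤ C ∧
      ∀ t s : ℝ, t ∈ Set.Icc 0 T → s ∈ Set.Icc 0 T → t < s →
      ∀ x x' : Fin n × Fin d → ℝ, anisoDist n d α x x' ≤ 1 →
      ∀ θ θ' : ℝ → Fin n × Fin d → ℝ,
        IsFlow n d T A F t x θ → IsFlow n d T A F t x' θ' →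
        anisoDist n d α (θ s) (θ' s) ≤
          C * (anisoDist n d α x x' + (s - t) ^ (1 / α)) := by
  obtain ⟨hα0, hα2⟩ := hα
  obtain ⟨hβ0, hβ1⟩ := hβ
  obtain ⟨hαβ1, hαβ2⟩ := hαβ
  -- the constants
  set cA : ℝ := ∑ q : Fin n × Fin d, ∑ p : Fin n × Fin d, |A q p| with hcA
  have hcA0 : 0 ≤ cA := Finset.sum_nonneg fun q _ => Finset.sum_nonneg fun p _ => abs_nonneg _
  set γ : ℝ := min (α - β) (1 - β) with hγdef
  have hγ0 : 0 < γ := lt_min (by linarith) (by linarith)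
  have hγαβ : γ ≤ α - β := min_le_left _ _
  have hγ1β : γ ≤ 1 - β := min_le_right _ _
  have hγ1 : γ ≤ 1 := by linarith
  set R : ℝ := (1 + cA + 3 * K * n) * 2 ^ ((1:ℝ) + 2 * n) with hRdef
  have h2pow1 : (1:ℝ) ≤ 2 ^ ((1:ℝ) + 2 * n) := by
    apply Real.one_le_rpow (by norm_num)
    positivity
  have hKn0 : 0 ≤ 3 * K * n := by positivity
  have hR1 : 1 ≤ R := by nlinarith [hcA0, hKn0, h2pow1]
  set M : ℝ := max 1 (R ^ (1/γ)) with hMdef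
  have hM1 : 1 ≤ M := le_max_left _ _
  have hM0 : 0 < M := by linarith
  have hMγ : R ≤ M ^ γ := by
    calc R = (R ^ (1/γ)) ^ γ := by
          rw [← Real.rpow_mul (by linarith), one_div_mul_cancel (ne_of_gt hγ0), Real.rpow_one]
      _ ≤ M ^ γ := Real.rpow_le_rpow (Real.rpow_nonneg (by linarith) _) (le_max_right _ _) (le_of_lt hγ0)
  refine ⟨n * M, ?_, ?_⟩
  · calc (1:ℝ) = 1 * 1 := by ring
      _ ≤ n * M := by
        apply mul_le_mul _ hM1 zero_le_one (Nat.cast_nonneg n)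
        exact_mod_cast hn
  intro t s ht hs hts x x' hxx θ θ' hθ hθ'
  set D : ℝ := anisoDist n d α x x' with hDdef
  have hts' : t ≤ s := le_of_lt hts
  have ht0 : 0 ≤ t := ht.1
  have hsT : s ≤ T := hs.2
  have hIts : Set.Icc t s ⊆ Set.Icc t T := Set.Icc_subset_Icc_right hsT
  have hIts0 : Set.Icc t s ⊆ Set.Icc 0 T := Set.Icc_subset_Icc ht0 hsT
  have hst1 : s - t ≤ 1 := by
    linarith only [hs.2, ht.1, hT1]
  have hst0 : 0 ≤ s - t := by linarith only [hts]
  have hD0 : 0 ≤ D := Finset.sum_nonneg fun j _ => Real.rpow_nonneg (norm_nonneg _) _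
  -- basic facts about flows
  have hθt : θ t = x := by
    have h := hθ.2 t (Set.mem_Icc.mpr ⟨le_refl t, le_trans hts' hsT⟩)
    rw [h, intervalIntegral.integral_same]; simp
  have hθ't : θ' t = x' := by
    have h := hθ'.2 t (Set.mem_Icc.mpr ⟨le_refl t, le_trans hts' hsT⟩)
    rw [h, intervalIntegral.integral_same]; simp
  have hθc : ContinuousOn θ (Set.Icc t s) := hθ.1.mono hIts
  have hθ'c : ContinuousOn θ' (Set.Icc t s) := hθ'.1.mono hIts
  have hu_cont : ∀ i : Fin n, ContinuousOn (fun v => ‖blkOf n d (θ v - θ' v) i‖) (Set.Icc t s) := by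
    intro i
    have h1 : ContinuousOn (fun v => θ v - θ' v) (Set.Icc t s) := hθc.sub hθ'c
    have h2 : ContinuousOn (fun v => blkL n d i (θ v - θ' v)) (Set.Icc t s) :=
      (blkL n d i).continuous.comp_continuousOn h1
    exact h2.norm
  -- the driving term and its properties
  set g : ℝ → Fin n × Fin d → ℝ :=
    fun v => A.mulVec (θ v - θ' v) + (F v (θ v) - F v (θ' v)) with hgdef
  have hAcont : Continuous fun w : Fin n × Fin d → ℝ => A.mulVec w := by
    apply continuous_pi
    intro q
    show Continuous fun w : Fin n × Fin d → ℝ => ∑ p : Fin n × Fin d, A q p * w p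
    exact continuous_finset_sum _ fun p _ => continuous_const.mul (continuous_apply p)
  have hFθ : ContinuousOn (fun v => F v (θ v)) (Set.Icc t s) := by
    have : ContinuousOn (fun v => ((v, θ v) : ℝ × (Fin n × Fin d → ℝ))) (Set.Icc t s) :=
      ContinuousOn.prodMk continuousOn_id hθc
    exact hFc.comp this (fun v hv => ⟨hIts0 hv, Set.mem_univ _⟩)
  have hFθ' : ContinuousOn (fun v => F v (θ' v)) (Set.Icc t s) := by
    have : ContinuousOn (fun v => ((v, θ' v) : ℝ × (Fin n × Fin d → ℝ))) (Set.Icc t s) :=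
      ContinuousOn.prodMk continuousOn_id hθ'c
    exact hFc.comp this (fun v hv => ⟨hIts0 hv, Set.mem_univ _⟩)
  have hgc : ContinuousOn g (Set.Icc t s) :=
    ((hAcont.comp_continuousOn (hθc.sub hθ'c))).add (hFθ.sub hFθ')
  have hgint : ∀ σ ∈ Set.Icc t s, IntervalIntegrable g volume t σ := by
    intro σ hσ
    apply ContinuousOn.intervalIntegrable
    rw [Set.uIcc_of_le hσ.1]
    exact hgc.mono (Set.Icc_subset_Icc_right hσ.2)
  -- the fundamental integral identity for the difference
  have hdiff : ∀ σ ∈ Set.Icc t s, θ σ - θ' σ = (x - x') + ∫ v in t..σ, g v := by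
    intro σ hσ
    have hItσ : Set.Icc t σ ⊆ Set.Icc t s := Set.Icc_subset_Icc_right hσ.2
    have hf : ContinuousOn (fun v => A.mulVec (θ v) + F v (θ v)) (Set.Icc t σ) :=
      ((hAcont.comp_continuousOn (hθc.mono hItσ))).add (hFθ.mono hItσ)
    have hf' : ContinuousOn (fun v => A.mulVec (θ' v) + F v (θ' v)) (Set.Icc t σ) :=
      ((hAcont.comp_continuousOn (hθ'c.mono hItσ))).add (hFθ'.mono hItσ)
    have hfi : IntervalIntegrable (fun v => A.mulVec (θ v) + F v (θ v)) volume t σ := by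
      apply ContinuousOn.intervalIntegrable; rwa [Set.uIcc_of_le hσ.1]
    have hfi' : IntervalIntegrable (fun v => A.mulVec (θ' v) + F v (θ' v)) volume t σ := by
      apply ContinuousOn.intervalIntegrable; rwa [Set.uIcc_of_le hσ.1]
    have h1 := hθ.2 σ (hIts hσ)
    have h2 := hθ'.2 σ (hIts hσ)
    have h3 : ((∫ v in t..σ, (A.mulVec (θ v) + F v (θ v))) -
        ∫ v in t..σ, (A.mulVec (θ' v) + F v (θ' v))) = ∫ v in t..σ, g v := by
      rw [← intervalIntegral.integral_sub hfi hfi']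
      apply intervalIntegral.integral_congr
      intro v _
      show (A.mulVec (θ v) + F v (θ v)) - (A.mulVec (θ' v) + F v (θ' v)) = g v
      rw [hgdef]
      simp only
      rw [Matrix.mulVec_sub]
      abel
    rw [h1, h2, ← h3]
    abel
  -- the key epsilon-bound
  have key : ∀ ε : ℝ, 0 < ε → ε ≤ 1 → ∀ i : Fin n,
      ‖blkOf n d (θ s - θ' s) i‖ ≤ (M * (D + ε + (s - t) ^ (1/α))) ^ (1 + α * (i : ℕ)) := by
    intro ε hε0 hε1
    set φ : ℝ → ℝ := fun v => D + ε + (v - t) ^ (1/α) with hφdef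
    have hαinv0 : (0:ℝ) ≤ 1/α := by positivity
    have hφc : Continuous φ := by
      apply Continuous.add continuous_const
      exact (Real.continuous_rpow_const hαinv0).comp (continuous_id.sub continuous_const)
    have hφmono : ∀ v w : ℝ, t ≤ v → v ≤ w → φ v ≤ φ w := by
      intro v w hv hvw
      have h : (v-t)^(1/α) ≤ (w-t)^(1/α) := Real.rpow_le_rpow (by linarith only [hv]) (by linarith only [hvw]) hαinv0
      simp only [hφdef]
      linarith only [h]
    have hφpos : ∀ v : ℝ, t ≤ v → 0 < φ v := by
      intro v hv
      have h : 0 ≤ (v-t)^(1/α) := Real.rpow_nonneg (by linarith only [hv]) _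
      simp only [hφdef]
      linarith only [h, hD0, hε0]
    have hφ3 : ∀ v ∈ Set.Icc t s, φ v ≤ 3 := by
      intro v hv
      have h1 : (v-t)^(1/α) ≤ 1 :=
        Real.rpow_le_one (by linarith only [hv.1]) (by linarith only [hv.2, hst1]) hαinv0
      simp only [hφdef]
      linarith only [h1, hD0, hε1, hxx]
    have hDle : ∀ i : Fin n, ‖blkOf n d (x - x') i‖ ≤ D ^ (1 + α * (i:ℕ)) := by
      intro i
      have he0 : (0:ℝ) < 1 + α * (i:ℕ) := by positivity
      have h1 : ‖blkOf n d (x - x') i‖ ^ (1/(1 + α * (i:ℕ))) ≤ D := by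
        rw [hDdef, anisoDist]
        exact Finset.single_le_sum (f := fun j => ‖blkOf n d (x - x') j‖ ^ (1/(1 + α * (j:ℕ))))
          (fun j _ => Real.rpow_nonneg (norm_nonneg _) _) (Finset.mem_univ i)
      calc ‖blkOf n d (x - x') i‖
          = (‖blkOf n d (x - x') i‖ ^ (1/(1 + α * (i:ℕ)))) ^ (1 + α * (i:ℕ)) := by
            rw [← Real.rpow_mul (norm_nonneg _), one_div_mul_cancel (ne_of_gt he0), Real.rpow_one]
        _ ≤ D ^ (1 + α * (i:ℕ)) :=
            Real.rpow_le_rpow (Real.rpow_nonneg (norm_nonneg _) _) h1 (le_of_lt he0)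
    have improve : ∀ σ ∈ Set.Icc t s,
        (∀ v ∈ Set.Icc t σ, ∀ k : Fin n,
          ‖blkOf n d (θ v - θ' v) k‖ ≤ (M * φ v) ^ (1 + α * (k:ℕ))) →
        ∀ i : Fin n, ‖blkOf n d (θ σ - θ' σ) i‖ ≤ (M/2 * φ σ) ^ (1 + α * (i:ℕ)) := by
      intro σ hσ hyp i
      have htσ : t ≤ σ := hσ.1
      have hφσ : 0 < φ σ := hφpos σ htσ
      have hφσ3 : φ σ ≤ 3 := hφ3 σ hσ
      have hMφpos : 0 < M * φ σ := by positivity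
      -- uniform bounds on [t, σ]
      have hukv : ∀ v ∈ Set.Icc t σ, ∀ k : Fin n,
          ‖blkOf n d (θ v - θ' v) k‖ ≤ (M * φ σ) ^ (1 + α * (k:ℕ)) := by
        intro v hv k
        refine (hyp v hv k).trans (Real.rpow_le_rpow ?_ ?_ (by positivity))
        · have := hφpos v hv.1
          positivity
        · exact mul_le_mul_of_nonneg_left (hφmono v σ hv.1 hv.2) (le_of_lt hM0)
      -- the exponent-collapse estimate
      have hcollapse : ∀ v ∈ Set.Icc t σ, ∀ (k : Fin n) (p : ℝ), 0 ≤ p →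
          ‖blkOf n d (θ v - θ' v) k‖ ^ (p / (1 + α * (k:ℕ))) ≤ (M * φ σ) ^ p := by
        intro v hv k p hp
        have hek : (0:ℝ) < 1 + α * (k:ℕ) := by positivity
        calc ‖blkOf n d (θ v - θ' v) k‖ ^ (p / (1 + α * (k:ℕ)))
            ≤ ((M * φ σ) ^ (1 + α * (k:ℕ))) ^ (p / (1 + α * (k:ℕ))) :=
              Real.rpow_le_rpow (norm_nonneg _) (hukv v hv k) (by positivity)
          _ = (M * φ σ) ^ p := by
              rw [← Real.rpow_mul (le_of_lt hMφpos)]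
              congr 1
              field_simp
      -- abstract integral bound
      have hInt : ∀ B : ℝ, (∀ v ∈ Set.Ioc t σ, ‖blkL n d i (g v)‖ ≤ B) →
          ‖blkOf n d (θ σ - θ' σ) i‖ ≤ ‖blkOf n d (x - x') i‖ + B * (σ - t) := by
        intro B hB
        have hid := hdiff σ hσ
        have h1 : blkOf n d (θ σ - θ' σ) i
            = blkOf n d (x - x') i + blkL n d i (∫ v in t..σ, g v) := by
          rw [hid]; rfl
        rw [h1]
        refine (norm_add_le _ _).trans ?_
        apply add_le_add_right
        have h2 : blkL n d i (∫ v in t..σ, g v) = ∫ v in t..σ, blkL n d i (g v) :=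
          ((blkL n d i).intervalIntegral_comp_comm (hgint σ hσ)).symm
        rw [h2]
        have h3 : ∀ v ∈ Set.uIoc t σ, ‖blkL n d i (g v)‖ ≤ B := by
          intro v hv
          rw [Set.uIoc_of_le htσ] at hv
          exact hB v hv
        have h4 := intervalIntegral.norm_integral_le_of_norm_le_const h3
        rwa [abs_of_nonneg (by linarith only [htσ])] at h4
      -- time-increment bound
      have hσtφ : σ - t ≤ (φ σ) ^ α := by
        have h1 : (σ - t) ^ (1/α) ≤ φ σ := by
          have h0 : 0 ≤ (σ - t) ^ (1/α) := Real.rpow_nonneg (by linarith only [htσ]) _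
          simp only [hφdef]
          linarith only [hD0, hε0]
        calc σ - t = ((σ - t) ^ (1/α)) ^ α := by
              rw [← Real.rpow_mul (by linarith only [htσ]), one_div_mul_cancel (ne_of_gt hα0), Real.rpow_one]
          _ ≤ (φ σ) ^ α := Real.rpow_le_rpow (Real.rpow_nonneg (by linarith only [htσ]) _) h1 (le_of_lt hα0)
      have hDφ : D ≤ φ σ := by
        have h0 : 0 ≤ (σ - t) ^ (1/α) := Real.rpow_nonneg (by linarith only [htσ]) _
        simp only [hφdef]
        linarith only [h0, hε0]
      -- membership conversion
      have hIoc_mem : ∀ v ∈ Set.Ioc t σ, v ∈ Set.Icc t σ ∧ v ∈ Set.Icc (0:ℝ) T := by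
        intro v hv
        refine ⟨⟨le_of_lt hv.1, hv.2⟩, ⟨le_trans ht0 (le_of_lt hv.1), le_trans hv.2 (le_trans hσ.2 hsT)⟩⟩
      -- numeric facts
      have hMγpos : 0 < M ^ γ := Real.rpow_pos_of_pos hM0 _
      have h2n : (2:ℝ) ≤ 2 ^ ((1:ℝ) + 2 * n) := by
        calc (2:ℝ) = 2 ^ (1:ℝ) := (Real.rpow_one 2).symm
          _ ≤ 2 ^ ((1:ℝ) + 2 * n) := by
              apply Real.rpow_le_rpow_of_exponent_le one_le_two
              have : (0:ℝ) ≤ (n:ℝ) := Nat.cast_nonneg n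
              linarith only [this]
      have h3le : (1:ℝ) ≤ 3 := by norm_num
      rcases Nat.eq_zero_or_pos (i : ℕ) with hi0 | hipos
      -- ===================== case i = 0 =====================
      · have hie : (((i:ℕ)):ℝ) = 0 := by rw [hi0]; simp
        have hi0' : i = ⟨0, hn⟩ := Fin.ext (by simp [hi0])
        have hB : ∀ v ∈ Set.Ioc t σ, ‖blkL n d i (g v)‖ ≤ K * ((n:ℝ) * (M * φ σ) ^ β) := by
          intro v hv
          obtain ⟨hv1, hv2⟩ := hIoc_mem v hv
          have hsplit : blkL n d i (g v) = blkOf n d (A.mulVec (θ v - θ' v)) i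
              + blkOf n d (F v (θ v) - F v (θ' v)) i := rfl
          rw [hsplit, blk_mulVec_zero A hA i hi0, zero_add]
          have h5 := hF1 v hv2 (θ v) (θ' v)
          rw [← hi0'] at h5
          refine h5.trans ?_
          apply mul_le_mul_of_nonneg_left _ hK
          calc ∑ k : Fin n, ‖blkOf n d (θ v - θ' v) k‖ ^ (β / (1 + α * (k:ℕ)))
              ≤ ∑ _k : Fin n, (M * φ σ) ^ β :=
                Finset.sum_le_sum fun k _ => hcollapse v hv1 k β (le_of_lt hβ0)
            _ = (n:ℝ) * (M * φ σ) ^ β := by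
                rw [Finset.sum_const, Finset.card_univ, Fintype.card_fin, nsmul_eq_mul]
        have h6 := hInt _ hB
        have hxD : ‖blkOf n d (x - x') i‖ ≤ D := by
          have h7 := hDle i
          rw [hie] at h7
          simpa using h7
        have hMβ1 : (1:ℝ) ≤ M ^ β := Real.one_le_rpow hM1 (le_of_lt hβ0)
        have hMβγ : M ^ β ≤ M ^ ((1:ℝ) - γ) :=
          Real.rpow_le_rpow_of_exponent_le hM1 (by linarith only [hγ1β]) 
        have hφab : (φ σ) ^ α * (φ σ) ^ β ≤ 3 * φ σ := by
          have h8 : (φ σ) ^ α * (φ σ) ^ β = φ σ * (φ σ) ^ (α + β - 1) := by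
            rw [← Real.rpow_add hφσ]
            nth_rewrite 2 [show φ σ = (φ σ) ^ (1:ℝ) from (Real.rpow_one _).symm]
            rw [← Real.rpow_add hφσ]
            ring_nf
          rw [h8]
          have h9 : (φ σ) ^ (α + β - 1) ≤ 3 ^ (α + β - 1) :=
            Real.rpow_le_rpow (le_of_lt hφσ) hφσ3 (by linarith only [hαβ1])
          have h10 : (3:ℝ) ^ (α + β - 1) ≤ 3 ^ (1:ℝ) :=
            Real.rpow_le_rpow_of_exponent_le (by norm_num) (by linarith only [hαβ2])
          rw [Real.rpow_one] at h10
          calc φ σ * (φ σ) ^ (α + β - 1) ≤ φ σ * 3 :=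
                mul_le_mul_of_nonneg_left (h9.trans h10) (le_of_lt hφσ)
            _ = 3 * φ σ := by ring
        have hMhalf : 1 + 3 * K * (n:ℝ) * M ^ β ≤ M / 2 := by
          have h11 : (1 + 3 * K * (n:ℝ)) * 2 ≤ M ^ γ := by
            refine le_trans ?_ hMγ
            rw [hRdef]
            exact mul_le_mul (by linarith only [hcA0]) h2n (by norm_num) (by positivity)
          have h12 : M ^ ((1:ℝ) - γ) = M / M ^ γ := by
            rw [Real.rpow_sub hM0, Real.rpow_one]
          have h13 : (1 + 3 * K * (n:ℝ)) * M ^ ((1:ℝ) - γ) ≤ M / 2 := by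
            rw [h12, mul_div_assoc', div_le_div_iff₀ hMγpos two_pos]
            calc (1 + 3 * K * (n:ℝ)) * M * 2 = M * ((1 + 3 * K * (n:ℝ)) * 2) := by ring
              _ ≤ M * M ^ γ := mul_le_mul_of_nonneg_left h11 (le_of_lt hM0)
          have h14 : 1 + 3 * K * (n:ℝ) * M ^ β ≤ (1 + 3 * K * (n:ℝ)) * M ^ β := by
            have hKn' : (0:ℝ) ≤ 3 * K * (n:ℝ) := by positivity
            nlinarith only [hMβ1, hKn']
          refine h14.trans (le_trans ?_ h13)
          exact mul_le_mul_of_nonneg_left hMβγ (by positivity)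
        have hchain : ‖blkOf n d (θ σ - θ' σ) i‖ ≤ M / 2 * φ σ := by
          have e1 : K * ((n:ℝ) * (M * φ σ) ^ β) * (σ - t)
              ≤ K * ((n:ℝ) * (M * φ σ) ^ β) * (φ σ) ^ α :=
            mul_le_mul_of_nonneg_left hσtφ (by positivity)
          have e2 : K * ((n:ℝ) * (M * φ σ) ^ β) * (φ σ) ^ α
              = K * (n:ℝ) * M ^ β * ((φ σ) ^ α * (φ σ) ^ β) := by
            rw [Real.mul_rpow (le_of_lt hM0) (le_of_lt hφσ)]
            ring
          have e3 : K * (n:ℝ) * M ^ β * ((φ σ) ^ α * (φ σ) ^ β)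
              ≤ K * (n:ℝ) * M ^ β * (3 * φ σ) :=
            mul_le_mul_of_nonneg_left hφab (by positivity)
          have e4 : ‖blkOf n d (θ σ - θ' σ) i‖ ≤ D + K * (n:ℝ) * M ^ β * (3 * φ σ) := by
            refine h6.trans ?_
            have := e1.trans (le_of_eq e2) |>.trans e3
            linarith
          have e5 : D + K * (n:ℝ) * M ^ β * (3 * φ σ) = D + 3 * K * (n:ℝ) * M ^ β * φ σ := by
            ring
          have e6 : D + 3 * K * (n:ℝ) * M ^ β * φ σ ≤ (1 + 3 * K * (n:ℝ) * M ^ β) * φ σ := by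
            have : (1 + 3 * K * (n:ℝ) * M ^ β) * φ σ = φ σ + 3 * K * (n:ℝ) * M ^ β * φ σ := by
              ring
            rw [this]
            linarith only [hDφ]
          have e7 : (1 + 3 * K * (n:ℝ) * M ^ β) * φ σ ≤ M / 2 * φ σ :=
            mul_le_mul_of_nonneg_right hMhalf (le_of_lt hφσ)
          calc ‖blkOf n d (θ σ - θ' σ) i‖ ≤ D + K * (n:ℝ) * M ^ β * (3 * φ σ) := e4
            _ = D + 3 * K * (n:ℝ) * M ^ β * φ σ := e5
            _ ≤ (1 + 3 * K * (n:ℝ) * M ^ β) * φ σ := e6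
            _ ≤ M / 2 * φ σ := e7
        rw [hie, show (1:ℝ) + α * 0 = 1 by ring, Real.rpow_one]
        exact hchain
      -- ===================== case i ≥ 1 =====================
      · obtain ⟨m, hm⟩ : ∃ m : ℕ, (i:ℕ) = m + 1 := ⟨(i:ℕ) - 1, by omega⟩
        set j : Fin n := ⟨m, by omega⟩ with hjdef
        have hj1 : (1:ℝ) + α * ((j:ℕ):ℝ) = (1 + α * ((i:ℕ):ℝ)) - α := by
          have hjv : ((j:ℕ):ℝ) = (m:ℝ) := by rw [hjdef]
          have hiv : (((i:ℕ)):ℝ) = (m:ℝ) + 1 := by rw [hm]; push_cast; ring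
          rw [hjv, hiv]; ring
        have hiv : (((i:ℕ)):ℝ) = (m:ℝ) + 1 := by rw [hm]; push_cast; ring
        have heR0 : (0:ℝ) < 1 + α * ((i:ℕ):ℝ) := by positivity
        have heRα : (0:ℝ) < (1 + α * ((i:ℕ):ℝ)) - α := by
          rw [hiv]
          have hm0 : (0:ℝ) ≤ (m:ℝ) := Nat.cast_nonneg m
          have : (0:ℝ) ≤ α * (m:ℝ) := by positivity
          linarith only [this]
        have heub : (1:ℝ) + α * ((i:ℕ):ℝ) ≤ 1 + 2 * (n:ℝ) := by
          have h1 : ((i:ℕ):ℝ) ≤ (n:ℝ) := by exact_mod_cast le_of_lt i.2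
          have h2 : (0:ℝ) ≤ ((i:ℕ):ℝ) := Nat.cast_nonneg _
          nlinarith only [h1, h2, hα0, hα2]
        have hB : ∀ v ∈ Set.Ioc t σ, ‖blkL n d i (g v)‖ ≤
            cA * (M * φ σ) ^ ((1 + α * ((i:ℕ):ℝ)) - α)
              + K * ((n:ℝ) * (M * φ σ) ^ ((1 + α * ((i:ℕ):ℝ)) - α + β)) := by
          intro v hv
          obtain ⟨hv1, hv2⟩ := hIoc_mem v hv
          have hsplit : blkL n d i (g v) = blkOf n d (A.mulVec (θ v - θ' v)) i
              + blkOf n d (F v (θ v) - F v (θ' v)) i := rfl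
          rw [hsplit]
          refine (norm_add_le _ _).trans (add_le_add ?_ ?_)
          · -- matrix part
            refine (norm_blk_mulVec_le A hA i j (by show m + 1 = (i:ℕ); omega) (θ v - θ' v)).trans ?_
            have h5 : ‖blkOf n d (θ v - θ' v) j‖ ≤ (M * φ σ) ^ ((1 + α * ((i:ℕ):ℝ)) - α) := by
              have := hukv v hv1 j
              rwa [hj1] at this
            exact mul_le_mul_of_nonneg_left h5 hcA0
          · -- Hölder part
            have h5 := hFi i (by omega) v hv2 (θ v) (θ' v)
            refine h5.trans ?_
            apply mul_le_mul_of_nonneg_left _ hK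
            have hpe : 1 + α * (((i:ℕ):ℝ) - 1) + β = (1 + α * ((i:ℕ):ℝ)) - α + β := by
              ring
            have hp0 : (0:ℝ) ≤ 1 + α * (((i:ℕ):ℝ) - 1) + β := by
              rw [hiv]
              have hm0 : (0:ℝ) ≤ (m:ℝ) := Nat.cast_nonneg m
              have ham : (0:ℝ) ≤ α * (m:ℝ) := by positivity
              linarith only [ham, hβ0]
            calc ∑ k ∈ Finset.univ.filter (fun k : Fin n => i ≤ k),
                  ‖blkOf n d (θ v - θ' v) k‖ ^ ((1 + α * (((i:ℕ):ℝ) - 1) + β) / (1 + α * (k:ℕ)))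
                ≤ ∑ _k ∈ Finset.univ.filter (fun k : Fin n => i ≤ k),
                    (M * φ σ) ^ (1 + α * (((i:ℕ):ℝ) - 1) + β) :=
                  Finset.sum_le_sum fun k _ =>
                    hcollapse v hv1 k (1 + α * (((i:ℕ):ℝ) - 1) + β) hp0
              _ = ((Finset.univ.filter (fun k : Fin n => i ≤ k)).card : ℝ)
                    * (M * φ σ) ^ (1 + α * (((i:ℕ):ℝ) - 1) + β) := by
                  rw [Finset.sum_const, nsmul_eq_mul]
              _ ≤ (n:ℝ) * (M * φ σ) ^ (1 + α * (((i:ℕ):ℝ) - 1) + β) := by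
                  apply mul_le_mul_of_nonneg_right _ (Real.rpow_nonneg (le_of_lt hMφpos) _)
                  have hcard : (Finset.univ.filter (fun k : Fin n => i ≤ k)).card ≤ n := by
                    refine le_trans (Finset.card_filter_le _ _) ?_
                    simp
                  exact_mod_cast hcard
              _ = (n:ℝ) * (M * φ σ) ^ ((1 + α * ((i:ℕ):ℝ)) - α + β) := by rw [hpe]
        have h6 := hInt _ hB
        -- assemble
        have hxD : ‖blkOf n d (x - x') i‖ ≤ (φ σ) ^ (1 + α * ((i:ℕ):ℝ)) :=
          (hDle i).trans (Real.rpow_le_rpow hD0 hDφ (le_of_lt heR0))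
        have hsplitpow : ∀ c : ℝ, (M * φ σ) ^ c * (φ σ) ^ α = M ^ c * (φ σ) ^ (c + α) := by
          intro c
          rw [Real.mul_rpow (le_of_lt hM0) (le_of_lt hφσ), Real.rpow_add hφσ]
          ring
        have hterm1 : cA * (M * φ σ) ^ ((1 + α * ((i:ℕ):ℝ)) - α) * (φ σ) ^ α
            = cA * M ^ ((1 + α * ((i:ℕ):ℝ)) - α) * (φ σ) ^ (1 + α * ((i:ℕ):ℝ)) := by
          rw [mul_assoc, hsplitpow]
          ring_nf
        have hterm2 : K * ((n:ℝ) * (M * φ σ) ^ ((1 + α * ((i:ℕ):ℝ)) - α + β)) * (φ σ) ^ α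
            = K * (n:ℝ) * M ^ ((1 + α * ((i:ℕ):ℝ)) - α + β)
              * ((φ σ) ^ (1 + α * ((i:ℕ):ℝ)) * (φ σ) ^ β) := by
          rw [mul_assoc, mul_assoc, hsplitpow]
          rw [show (1 + α * ((i:ℕ):ℝ)) - α + β + α = (1 + α * ((i:ℕ):ℝ)) + β by ring]
          rw [Real.rpow_add hφσ]
          ring
        have hφβ3 : (φ σ) ^ β ≤ 3 := by
          have h9 : (φ σ) ^ β ≤ 3 ^ β :=
            Real.rpow_le_rpow (le_of_lt hφσ) hφσ3 (le_of_lt hβ0)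
          have h10 : (3:ℝ) ^ β ≤ 3 ^ (1:ℝ) :=
            Real.rpow_le_rpow_of_exponent_le (by norm_num) (by linarith only [hβ1])
          rw [Real.rpow_one] at h10
          linarith only [h9, h10]
        have hMexp1 : M ^ ((1 + α * ((i:ℕ):ℝ)) - α) ≤ M ^ ((1 + α * ((i:ℕ):ℝ)) - γ) :=
          Real.rpow_le_rpow_of_exponent_le hM1 (by linarith only [hγαβ, hβ0])
        have hMexp2 : M ^ ((1 + α * ((i:ℕ):ℝ)) - α + β) ≤ M ^ ((1 + α * ((i:ℕ):ℝ)) - γ) :=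
          Real.rpow_le_rpow_of_exponent_le hM1 (by linarith only [hγαβ])
        have hMe1 : (1:ℝ) ≤ M ^ ((1 + α * ((i:ℕ):ℝ)) - γ) := by
          apply Real.one_le_rpow hM1
          have : (0:ℝ) ≤ α * ((i:ℕ):ℝ) := by positivity
          linarith only [this, hγ1]
        have hφe0 : (0:ℝ) ≤ (φ σ) ^ (1 + α * ((i:ℕ):ℝ)) := Real.rpow_nonneg (le_of_lt hφσ) _
        have hMφe0 : (0:ℝ) ≤ M ^ ((1 + α * ((i:ℕ):ℝ)) - γ) := Real.rpow_nonneg (le_of_lt hM0) _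
        have hstep : ‖blkOf n d (θ σ - θ' σ) i‖ ≤
            (1 + cA + 3 * K * (n:ℝ)) * M ^ ((1 + α * ((i:ℕ):ℝ)) - γ)
              * (φ σ) ^ (1 + α * ((i:ℕ):ℝ)) := by
          have hBpos : (0:ℝ) ≤ cA * (M * φ σ) ^ ((1 + α * ((i:ℕ):ℝ)) - α)
              + K * ((n:ℝ) * (M * φ σ) ^ ((1 + α * ((i:ℕ):ℝ)) - α + β)) := by positivity
          have e1 : (cA * (M * φ σ) ^ ((1 + α * ((i:ℕ):ℝ)) - α)
              + K * ((n:ℝ) * (M * φ σ) ^ ((1 + α * ((i:ℕ):ℝ)) - α + β))) * (σ - t)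
              ≤ (cA * (M * φ σ) ^ ((1 + α * ((i:ℕ):ℝ)) - α)
              + K * ((n:ℝ) * (M * φ σ) ^ ((1 + α * ((i:ℕ):ℝ)) - α + β))) * (φ σ) ^ α :=
            mul_le_mul_of_nonneg_left hσtφ hBpos
          have e2 : (cA * (M * φ σ) ^ ((1 + α * ((i:ℕ):ℝ)) - α)
              + K * ((n:ℝ) * (M * φ σ) ^ ((1 + α * ((i:ℕ):ℝ)) - α + β))) * (φ σ) ^ α
              = cA * M ^ ((1 + α * ((i:ℕ):ℝ)) - α) * (φ σ) ^ (1 + α * ((i:ℕ):ℝ))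
              + K * (n:ℝ) * M ^ ((1 + α * ((i:ℕ):ℝ)) - α + β)
                * ((φ σ) ^ (1 + α * ((i:ℕ):ℝ)) * (φ σ) ^ β) := by
            rw [add_mul, hterm1, hterm2]
          have e3 : cA * M ^ ((1 + α * ((i:ℕ):ℝ)) - α) * (φ σ) ^ (1 + α * ((i:ℕ):ℝ))
              ≤ cA * M ^ ((1 + α * ((i:ℕ):ℝ)) - γ) * (φ σ) ^ (1 + α * ((i:ℕ):ℝ)) := by
            apply mul_le_mul_of_nonneg_right _ hφe0
            exact mul_le_mul_of_nonneg_left hMexp1 hcA0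
          have e4 : K * (n:ℝ) * M ^ ((1 + α * ((i:ℕ):ℝ)) - α + β)
                * ((φ σ) ^ (1 + α * ((i:ℕ):ℝ)) * (φ σ) ^ β)
              ≤ 3 * (K * (n:ℝ)) * M ^ ((1 + α * ((i:ℕ):ℝ)) - γ)
                * (φ σ) ^ (1 + α * ((i:ℕ):ℝ)) := by
            have f1 : (φ σ) ^ (1 + α * ((i:ℕ):ℝ)) * (φ σ) ^ β
                ≤ (φ σ) ^ (1 + α * ((i:ℕ):ℝ)) * 3 :=
              mul_le_mul_of_nonneg_left hφβ3 hφe0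
            calc K * (n:ℝ) * M ^ ((1 + α * ((i:ℕ):ℝ)) - α + β)
                  * ((φ σ) ^ (1 + α * ((i:ℕ):ℝ)) * (φ σ) ^ β)
                ≤ K * (n:ℝ) * M ^ ((1 + α * ((i:ℕ):ℝ)) - α + β)
                  * ((φ σ) ^ (1 + α * ((i:ℕ):ℝ)) * 3) := by
                  apply mul_le_mul_of_nonneg_left f1 (by positivity)
              _ = 3 * (K * (n:ℝ)) * M ^ ((1 + α * ((i:ℕ):ℝ)) - α + β)
                  * (φ σ) ^ (1 + α * ((i:ℕ):ℝ)) := by ring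
              _ ≤ 3 * (K * (n:ℝ)) * M ^ ((1 + α * ((i:ℕ):ℝ)) - γ)
                  * (φ σ) ^ (1 + α * ((i:ℕ):ℝ)) := by
                  apply mul_le_mul_of_nonneg_right _ hφe0
                  exact mul_le_mul_of_nonneg_left hMexp2 (by positivity)
          have e5 : ‖blkOf n d (θ σ - θ' σ) i‖ ≤
              (φ σ) ^ (1 + α * ((i:ℕ):ℝ))
              + cA * M ^ ((1 + α * ((i:ℕ):ℝ)) - γ) * (φ σ) ^ (1 + α * ((i:ℕ):ℝ))
              + 3 * (K * (n:ℝ)) * M ^ ((1 + α * ((i:ℕ):ℝ)) - γ) * (φ σ) ^ (1 + α * ((i:ℕ):ℝ)) := by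
            have := e1.trans (le_of_eq e2)
            have h6' := h6
            linarith only [this, e3, e4, hxD, h6']
          refine e5.trans ?_
          have f2 : (φ σ) ^ (1 + α * ((i:ℕ):ℝ)) ≤
              M ^ ((1 + α * ((i:ℕ):ℝ)) - γ) * (φ σ) ^ (1 + α * ((i:ℕ):ℝ)) := by
            nth_rewrite 1 [show (φ σ) ^ (1 + α * ((i:ℕ):ℝ))
              = 1 * (φ σ) ^ (1 + α * ((i:ℕ):ℝ)) from (one_mul _).symm]
            exact mul_le_mul_of_nonneg_right hMe1 hφe0
          linarith only [f2]
        refine hstep.trans ?_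
        -- final numeric comparison
        have h2e : (2:ℝ) ^ (1 + α * ((i:ℕ):ℝ)) ≤ 2 ^ ((1:ℝ) + 2 * n) :=
          Real.rpow_le_rpow_of_exponent_le one_le_two heub
        have h2epos : (0:ℝ) < 2 ^ (1 + α * ((i:ℕ):ℝ)) := Real.rpow_pos_of_pos two_pos _
        have hnum : (1 + cA + 3 * K * (n:ℝ)) * M ^ ((1 + α * ((i:ℕ):ℝ)) - γ)
            ≤ (M / 2) ^ (1 + α * ((i:ℕ):ℝ)) := by
          rw [Real.div_rpow (le_of_lt hM0) (by norm_num : (0:ℝ) ≤ 2)]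
          rw [Real.rpow_sub hM0, mul_div_assoc']
          rw [div_le_div_iff₀ hMγpos h2epos]
          calc (1 + cA + 3 * K * (n:ℝ)) * M ^ (1 + α * ((i:ℕ):ℝ)) * 2 ^ (1 + α * ((i:ℕ):ℝ))
              = M ^ (1 + α * ((i:ℕ):ℝ)) * ((1 + cA + 3 * K * (n:ℝ)) * 2 ^ (1 + α * ((i:ℕ):ℝ))) := by
                ring
            _ ≤ M ^ (1 + α * ((i:ℕ):ℝ)) * ((1 + cA + 3 * K * (n:ℝ)) * 2 ^ ((1:ℝ) + 2 * n)) := by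
                apply mul_le_mul_of_nonneg_left _ (Real.rpow_nonneg (le_of_lt hM0) _)
                exact mul_le_mul_of_nonneg_left h2e (by positivity)
            _ ≤ M ^ (1 + α * ((i:ℕ):ℝ)) * M ^ γ := by
                apply mul_le_mul_of_nonneg_left _ (Real.rpow_nonneg (le_of_lt hM0) _)
                rw [hRdef] at hMγ
                exact hMγ
        calc (1 + cA + 3 * K * (n:ℝ)) * M ^ ((1 + α * ((i:ℕ):ℝ)) - γ)
              * (φ σ) ^ (1 + α * ((i:ℕ):ℝ))
            ≤ (M / 2) ^ (1 + α * ((i:ℕ):ℝ)) * (φ σ) ^ (1 + α * ((i:ℕ):ℝ)) :=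
              mul_le_mul_of_nonneg_right hnum hφe0
          _ = (M / 2 * φ σ) ^ (1 + α * ((i:ℕ):ℝ)) :=
              (Real.mul_rpow (by positivity) (le_of_lt hφσ)).symm
    -- continuous induction on the interval
    have hrhs_cont : ∀ i : Fin n, Continuous (fun v => (M * φ v) ^ (1 + α * (i:ℕ))) := by
      intro i
      exact (Real.continuous_rpow_const (by positivity)).comp (continuous_const.mul hφc)
    have main : ∀ v ∈ Set.Icc t s, ∀ i : Fin n,
        ‖blkOf n d (θ v - θ' v) i‖ ≤ (M * φ v) ^ (1 + α * (i:ℕ)) := by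
      by_contra hcon
      push_neg at hcon
      obtain ⟨v₀, hv₀, i₀, hi₀⟩ := hcon
      set bad : Set ℝ := {v ∈ Set.Icc t s | ∃ i : Fin n,
        (M * φ v) ^ (1 + α * (i:ℕ)) ≤ ‖blkOf n d (θ v - θ' v) i‖} with hbaddef
      have hbadne : bad.Nonempty := ⟨v₀, hv₀, i₀, le_of_lt hi₀⟩
      have hbadclosed : IsClosed bad := by
        have hrw : bad = ⋃ i : Fin n, {v ∈ Set.Icc t s |
            (M * φ v) ^ (1 + α * (i:ℕ)) ≤ ‖blkOf n d (θ v - θ' v) i‖} := by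
          ext v
          simp only [hbaddef, Set.mem_setOf_eq, Set.mem_iUnion]
          constructor
          · rintro ⟨h1, i, h2⟩; exact ⟨i, h1, h2⟩
          · rintro ⟨i, h1, h2⟩; exact ⟨h1, i, h2⟩
        rw [hrw]
        apply isClosed_iUnion_of_finite
        intro i
        exact IsClosed.isClosed_le isClosed_Icc ((hrhs_cont i).continuousOn) (hu_cont i)
      have hbddb : BddBelow bad := ⟨t, fun v hv => hv.1.1⟩
      set τ : ℝ := sInf bad with hτdef
      have hτbad : τ ∈ bad := hbadclosed.csInf_mem hbadne hbddb
      have hτIcc : τ ∈ Set.Icc t s := hτbad.1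
      have htgood : ∀ i : Fin n, ‖blkOf n d (θ t - θ' t) i‖ < (M * φ t) ^ (1 + α * (i:ℕ)) := by
        intro i
        rw [hθt, hθ't]
        have hφt : φ t = D + ε := by
          simp only [hφdef, sub_self]
          rw [Real.zero_rpow (by positivity : 1/α ≠ 0)]
          ring
        have h2 : D < M * φ t := by
          rw [hφt]
          nlinarith
        calc ‖blkOf n d (x - x') i‖ ≤ D ^ (1 + α*(i:ℕ)) := hDle i
          _ < (M * φ t) ^ (1 + α*(i:ℕ)) := Real.rpow_lt_rpow hD0 h2 (by positivity)
      have htτ : t < τ := by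
        rcases lt_or_eq_of_le hτIcc.1 with h | h
        · exact h
        · exfalso
          obtain ⟨i, hi⟩ := hτbad.2
          rw [← h] at hi
          exact absurd hi (not_le.mpr (htgood i))
      have hIcoτ : ∀ v ∈ Set.Ico t τ, ∀ k : Fin n,
          ‖blkOf n d (θ v - θ' v) k‖ ≤ (M * φ v) ^ (1 + α * (k:ℕ)) := by
        intro v hv k
        by_contra hcon2
        push_neg at hcon2
        have hmem : v ∈ bad := ⟨⟨hv.1, le_trans (le_of_lt hv.2) hτIcc.2⟩, k, le_of_lt hcon2⟩
        exact absurd (csInf_le hbddb hmem) (not_le.mpr hv.2)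
      have hIccτs : Set.Icc t τ ⊆ Set.Icc t s := Set.Icc_subset_Icc_right hτIcc.2
      have hweak : ∀ v ∈ Set.Icc t τ, ∀ k : Fin n,
          ‖blkOf n d (θ v - θ' v) k‖ ≤ (M * φ v) ^ (1 + α * (k:ℕ)) := by
        intro v hv k
        rcases lt_or_eq_of_le hv.2 with h | h
        · exact hIcoτ v ⟨hv.1, h⟩ k
        · rw [h]
          have hcl : closure (Set.Ico t τ) = Set.Icc t τ := closure_Ico (ne_of_lt htτ)
          refine le_on_closure (f := fun w => ‖blkOf n d (θ w - θ' w) k‖)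
            (g := fun w => (M * φ w) ^ (1 + α * (k:ℕ)))
            (fun w hw => hIcoτ w hw k) ?_ ?_ ?_
          · rw [hcl]; exact (hu_cont k).mono hIccτs
          · rw [hcl]; exact (hrhs_cont k).continuousOn
          · rw [hcl]; exact ⟨le_of_lt htτ, le_refl τ⟩
      obtain ⟨i, hi⟩ := hτbad.2
      have himp := improve τ hτIcc hweak i
      have hφτ : 0 < φ τ := hφpos τ hτIcc.1
      have hlt : (M/2 * φ τ) ^ (1 + α * (i:ℕ)) < (M * φ τ) ^ (1 + α * (i:ℕ)) := by
        apply Real.rpow_lt_rpow (by positivity) _ (by positivity)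
        have hq := mul_pos (half_pos hM0) hφτ
        linarith only [hq]
      linarith only [hi, himp, hlt]
    intro i
    exact main s (Set.mem_Icc.mpr ⟨hts', le_refl s⟩) i
  -- pass to the limit and sum up
  have hX0 : 0 ≤ (s - t) ^ (1/α) := Real.rpow_nonneg hst0 _
  have hfinal : ∀ i : Fin n, ‖blkOf n d (θ s - θ' s) i‖ ^ (1/(1 + α * (i:ℕ))) ≤
      M * (D + (s - t) ^ (1/α)) := by
    intro i
    apply le_of_forall_pos_le_add
    intro ε' hε'
    have hε0 : 0 < min (ε'/M) 1 := lt_min (by positivity) one_pos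
    have hε1 : min (ε'/M) 1 ≤ 1 := min_le_right _ _
    have h := key (min (ε'/M) 1) hε0 hε1 i
    have he0 : (0:ℝ) < 1 + α * (i:ℕ) := by positivity
    have hbase : 0 ≤ M * (D + min (ε'/M) 1 + (s - t) ^ (1/α)) := by positivity
    have h2 : ‖blkOf n d (θ s - θ' s) i‖ ^ (1/(1 + α * (i:ℕ))) ≤
        M * (D + min (ε'/M) 1 + (s - t) ^ (1/α)) := by
      calc ‖blkOf n d (θ s - θ' s) i‖ ^ (1/(1 + α * (i:ℕ)))
          ≤ ((M * (D + min (ε'/M) 1 + (s - t) ^ (1/α))) ^ (1 + α * (i:ℕ))) ^ (1/(1 + α * (i:ℕ))) :=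
            Real.rpow_le_rpow (norm_nonneg _) h (by positivity)
        _ = M * (D + min (ε'/M) 1 + (s - t) ^ (1/α)) := by
            rw [← Real.rpow_mul hbase, mul_one_div_cancel (ne_of_gt he0), Real.rpow_one]
    have h4 : M * min (ε'/M) 1 ≤ ε' := by
      calc M * min (ε'/M) 1 ≤ M * (ε'/M) :=
            mul_le_mul_of_nonneg_left (min_le_left _ _) (le_of_lt hM0)
        _ = ε' := by field_simp
    linarith only [h2, h4, hD0, hX0, hM0]
  calc anisoDist n d α (θ s) (θ' s)
      = ∑ i : Fin n, ‖blkOf n d (θ s - θ' s) i‖ ^ (1/(1 + α * (i:ℕ))) := rfl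
    _ ≤ ∑ _i : Fin n, M * (D + (s - t) ^ (1/α)) := Finset.sum_le_sum fun i _ => hfinal i
    _ = (n * M) * (D + (s - t) ^ (1/α)) := by
        rw [Finset.sum_const, Finset.card_univ, Fintype.card_fin]
        push_cast
        ring
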